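/- Integrated multiple-addition formula: in the setting above, ⟨f^{(M)}, g^{(M)}⟩(x) = ⟨f,g⟩(x) − Σ_{j,k=1}^M ⟨φ_j,f⟩(x) (F^{-1}(x))_{jk} ⟨φ_k,g⟩(x) for all x in (x1,x2). -/

import Mathlib

open Set MeasureTheory intervalIntegral Matrix

lemma differentiableAt_det_path {M : ℕ} {A : ℝ → Matrix (Fin M) (Fin M) ℝ} {t : ℝ}
    (h : ∀ j k, DifferentiableAt ℝ (fun s => A s j k) t) :
    DifferentiableAt ℝ (fun s => (A s).det) t := by
  simp only [Matrix.det_apply']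
  exact DifferentiableAt.fun_sum fun σ _ =>
    (DifferentiableAt.fun_finsetProd fun i _ => h (σ i) i).const_mul _

lemma hasDerivAt_matrix_inv {M : ℕ} {Fm : ℝ → Matrix (Fin M) (Fin M) ℝ}
    {F' : Matrix (Fin M) (Fin M) ℝ} {t : ℝ}
    (hF' : ∀ j k, HasDerivAt (fun s => Fm s j k) (F' j k) t)
    (hdet : ∀ᶠ s in nhds t, IsUnit (Fm s).det) :
    ∀ j k, HasDerivAt (fun s => (Fm s)⁻¹ j k)
      ((-((Fm t)⁻¹ * F' * (Fm t)⁻¹)) j k) t := by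
  have hdet0 : (Fm t).det ≠ 0 := (isUnit_iff_ne_zero.1 hdet.self_of_nhds)
  have hrw : ∀ j k : Fin M, (fun s => (Fm s)⁻¹ j k)
      = fun s => ((Fm s).det)⁻¹ * (Fm s).adjugate j k := by
    intro j k
    funext s
    rw [Matrix.inv_def, Matrix.smul_apply, Ring.inverse_eq_inv', smul_eq_mul]
  have ddet : DifferentiableAt ℝ (fun s => (Fm s).det) t :=
    differentiableAt_det_path fun j k => (hF' j k).differentiableAt
  have hdiff : ∀ j k : Fin M, DifferentiableAt ℝ (fun s => (Fm s)⁻¹ j k) t := by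
    intro j k
    rw [hrw j k]
    refine (ddet.inv hdet0).mul ?_
    have hadj : (fun s => (Fm s).adjugate j k)
        = fun s => ((Fm s).updateRow k (Pi.single j 1)).det :=
      funext fun s => Matrix.adjugate_apply _ _ _
    rw [hadj]
    refine differentiableAt_det_path fun a b => ?_
    rcases eq_or_ne a k with rfl | hak
    · simp only [Matrix.updateRow_apply, if_pos rfl]
      exact differentiableAt_const _
    · simp only [Matrix.updateRow_apply, if_neg hak]
      exact (hF' a b).differentiableAt
  set n' : Matrix (Fin M) (Fin M) ℝ :=
    Matrix.of fun j k => deriv (fun s => (Fm s)⁻¹ j k) t with hn'def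
  have hn' : ∀ j k, HasDerivAt (fun s => (Fm s)⁻¹ j k) (n' j k) t := fun j k =>
    (hdiff j k).hasDerivAt
  have hFmt : IsUnit (Fm t).det := hdet.self_of_nhds
  have hzero : F' * (Fm t)⁻¹ + Fm t * n' = 0 := by
    ext j k
    have h1 : HasDerivAt (fun s => ∑ l, Fm s j l * (Fm s)⁻¹ l k)
        (∑ l, (F' j l * (Fm t)⁻¹ l k + Fm t j l * n' l k)) t :=
      HasDerivAt.fun_sum fun l _ => (hF' j l).mul (hn' l k)
    have heq : (fun s => ∑ l, Fm s j l * (Fm s)⁻¹ l k)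
        =ᶠ[nhds t] fun _ => (1 : Matrix (Fin M) (Fin M) ℝ) j k := by
      filter_upwards [hdet] with s hs
      rw [← Matrix.mul_apply, Matrix.mul_nonsing_inv _ hs]
    have h2 : HasDerivAt (fun s => ∑ l, Fm s j l * (Fm s)⁻¹ l k) 0 t :=
      (hasDerivAt_const t _).congr_of_eventuallyEq heq
    have h3 := h1.unique h2
    simpa [Matrix.add_apply, Matrix.mul_apply, Matrix.zero_apply,
      Finset.sum_add_distrib] using h3
  have hform : n' = -((Fm t)⁻¹ * F' * (Fm t)⁻¹) := by
    have h4 : Fm t * n' = -(F' * (Fm t)⁻¹) := by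
      rw [eq_neg_iff_add_eq_zero, add_comm]
      exact hzero
    calc n' = (Fm t)⁻¹ * Fm t * n' := by
            rw [Matrix.nonsing_inv_mul _ hFmt, Matrix.one_mul]
      _ = (Fm t)⁻¹ * (Fm t * n') := by rw [Matrix.mul_assoc]
      _ = -((Fm t)⁻¹ * F' * (Fm t)⁻¹) := by
            rw [h4, Matrix.mul_neg, Matrix.mul_assoc]
  intro j k
  rw [← hform]
  exact hn' j k

lemma continuousOn_matrix_inv {M : ℕ} {Fm : ℝ → Matrix (Fin M) (Fin M) ℝ} {S : Set ℝ}
    (hc : ∀ j k, ContinuousOn (fun t => Fm t j k) S)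
    (hdet : ∀ t ∈ S, (Fm t).det ≠ 0) :
    ∀ j k, ContinuousOn (fun t => (Fm t)⁻¹ j k) S := by
  have hFm : ContinuousOn Fm S := by
    apply continuousOn_pi.2
    intro j
    exact continuousOn_pi.2 fun k => hc j k
  have hdetc : ContinuousOn (fun t => (Fm t).det) S :=
    (continuous_id.matrix_det).comp_continuousOn hFm
  intro j k
  have hrw : (fun t => (Fm t)⁻¹ j k)
      = fun t => ((Fm t).det)⁻¹ * (Fm t).adjugate j k := by
    funext s
    rw [Matrix.inv_def, Matrix.smul_apply, Ring.inverse_eq_inv', smul_eq_mul]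
  rw [hrw]
  exact (hdetc.inv₀ hdet).mul
    (((continuous_id.matrix_adjugate).matrix_elem j k).comp_continuousOn hFm)

lemma am_algebra {M : ℕ} (a b p : Fin M → ℝ) (n : Matrix (Fin M) (Fin M) ℝ)
    (hsymm : ∀ j k, n j k = n k j) (ft gt : ℝ) :
    ∑ j, ∑ k, ((p j * ft * n j k + a j * (-(n * (Matrix.of fun l m => p l * p m) * n)) j k) * b k
        + a j * n j k * (p k * gt))
      = ft * gt -
        (ft - ∑ j, ∑ k, p j * n j k * a k) * (gt - ∑ j, ∑ k, p j * n j k * b k) := by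
  have hPn : ∀ j k, (n * (Matrix.of fun l m => p l * p m) * n) j k
      = (∑ l, n j l * p l) * (∑ m, p m * n m k) := by
    intro j k
    simp only [Matrix.mul_apply, Matrix.of_apply]
    rw [Finset.sum_mul_sum]
    rw [Finset.sum_comm]
    refine Finset.sum_congr rfl fun m _ => ?_
    rw [Finset.sum_mul]
    exact Finset.sum_congr rfl fun l _ => by ring
  have hS1 : ∑ j, ∑ k, (p j * ft * n j k) * b k
      = ft * ∑ j, ∑ k, p j * n j k * b k := by
    rw [Finset.mul_sum]
    refine Finset.sum_congr rfl fun j _ => ?_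
    rw [Finset.mul_sum]
    exact Finset.sum_congr rfl fun k _ => by ring
  have hS3 : ∑ j, ∑ k, a j * n j k * (p k * gt)
      = (∑ j, ∑ k, p j * n j k * a k) * gt := by
    rw [Finset.sum_comm, Finset.sum_mul]
    refine Finset.sum_congr rfl fun j _ => ?_
    rw [Finset.sum_mul]
    refine Finset.sum_congr rfl fun k _ => ?_
    rw [hsymm j k]
    ring
  have hfac1 : ∑ j, a j * ∑ l, n j l * p l = ∑ j, ∑ k, p j * n j k * a k := by
    simp_rw [Finset.mul_sum]
    rw [Finset.sum_comm]
    refine Finset.sum_congr rfl fun j _ => Finset.sum_congr rfl fun k _ => ?_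
    rw [hsymm k j]
    ring
  have hfac2 : ∑ k, (∑ m, p m * n m k) * b k = ∑ j, ∑ k, p j * n j k * b k := by
    simp_rw [Finset.sum_mul]
    rw [Finset.sum_comm]
  have hS2 : ∑ j, ∑ k, a j * ((n * (Matrix.of fun l m => p l * p m) * n) j k) * b k
      = (∑ j, ∑ k, p j * n j k * a k) * (∑ j, ∑ k, p j * n j k * b k) := by
    simp_rw [hPn]
    rw [← hfac1, ← hfac2, Finset.sum_mul_sum]
    refine Finset.sum_congr rfl fun j _ => Finset.sum_congr rfl fun k _ => ?_
    ring
  have hsplit : ∑ j, ∑ k,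
      ((p j * ft * n j k + a j * (-(n * (Matrix.of fun l m => p l * p m) * n)) j k) * b k
        + a j * n j k * (p k * gt))
      = (∑ j, ∑ k, (p j * ft * n j k) * b k)
        - (∑ j, ∑ k, a j * ((n * (Matrix.of fun l m => p l * p m) * n) j k) * b k)
        + ∑ j, ∑ k, a j * n j k * (p k * gt) := by
    rw [← Finset.sum_sub_distrib, ← Finset.sum_add_distrib]
    refine Finset.sum_congr rfl fun j _ => ?_
    rw [← Finset.sum_sub_distrib, ← Finset.sum_add_distrib]
    refine Finset.sum_congr rfl fun k _ => ?_
    simp only [Matrix.neg_apply]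
    ring
  rw [hsplit, hS1, hS2, hS3]
  ring

lemma am_algebra2 {M : ℕ} (a b p : Fin M → ℝ) (n : Matrix (Fin M) (Fin M) ℝ) (ft gt : ℝ) :
    (ft - ∑ j, ∑ k, p j * n j k * a k) * (gt - ∑ j, ∑ k, p j * n j k * b k)
      = ft * gt - (∑ j, ∑ k, (p j * ft) * (n j k * b k))
        - (∑ j, ∑ k, (p j * gt) * (n j k * a k))
        + ∑ j, ∑ l, (p j * p l) * ((∑ k, n j k * a k) * (∑ m, n l m * b m)) := by
  have e1 : ∑ j, ∑ k, p j * n j k * a k = ∑ j, p j * ∑ k, n j k * a k := by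
    simp_rw [Finset.mul_sum, mul_assoc]
  have e2 : ∑ j, ∑ k, p j * n j k * b k = ∑ j, p j * ∑ k, n j k * b k := by
    simp_rw [Finset.mul_sum, mul_assoc]
  have e3 : ∑ j, ∑ k, (p j * ft) * (n j k * b k) = ft * ∑ j, p j * ∑ k, n j k * b k := by
    rw [Finset.mul_sum]
    refine Finset.sum_congr rfl fun j _ => ?_
    rw [Finset.mul_sum, Finset.mul_sum]
    exact Finset.sum_congr rfl fun k _ => by ring
  have e4 : ∑ j, ∑ k, (p j * gt) * (n j k * a k) = gt * ∑ j, p j * ∑ k, n j k * a k := by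
    rw [Finset.mul_sum]
    refine Finset.sum_congr rfl fun j _ => ?_
    rw [Finset.mul_sum, Finset.mul_sum]
    exact Finset.sum_congr rfl fun k _ => by ring
  have e5 : ∑ j, ∑ l, (p j * p l) * ((∑ k, n j k * a k) * (∑ m, n l m * b m))
      = (∑ j, p j * ∑ k, n j k * a k) * (∑ j, p j * ∑ k, n j k * b k) := by
    rw [Finset.sum_mul_sum]
    refine Finset.sum_congr rfl fun j _ => Finset.sum_congr rfl fun l _ => by ring
  rw [e1, e2, e3, e4, e5]
  ring

/-- The Abraham–Moses matrix `F(x)` with entries `δ_{jk} + ∫_{x1}^x φ_j φ_k`. -/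
noncomputable def amF (x1 : ℝ) {M : ℕ} (φ : Fin M → ℝ → ℝ) (x : ℝ) :
    Matrix (Fin M) (Fin M) ℝ :=
  Matrix.of fun j k => (if j = k then (1 : ℝ) else 0) + ∫ t in x1..x, φ j t * φ k t

/-- The `M`-fold Abraham–Moses transform `f^{(M)} = f − Σ_{j,k} φ_j (F⁻¹)_{jk} ⟨φ_k,f⟩`. -/
noncomputable def amTransform (x1 : ℝ) {M : ℕ} (φ : Fin M → ℝ → ℝ)
    (f : ℝ → ℝ) (x : ℝ) : ℝ :=
  f x - ∑ j : Fin M, ∑ k : Fin M,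
    φ j x * (amF x1 φ x)⁻¹ j k * ∫ t in x1..x, φ k t * f t

lemma amF_symm (x1 : ℝ) {M : ℕ} (φ : Fin M → ℝ → ℝ) (t : ℝ) :
    (amF x1 φ t)ᵀ = amF x1 φ t := by
  ext j k
  simp only [transpose_apply, amF, Matrix.of_apply]
  rw [intervalIntegral.integral_congr (g := fun s => φ j s * φ k s)
    (fun s _ => mul_comm _ _)]
  congr 1
  simp [eq_comm]

lemma amF_posDef (x1 : ℝ) {M : ℕ} (φ : Fin M → ℝ → ℝ) (t : ℝ) (ht1 : x1 ≤ t)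
    (hint : ∀ j k : Fin M, IntervalIntegrable (fun y => φ j y * φ k y) volume x1 t) :
    (amF x1 φ t).PosDef := by
  rw [posDef_iff_dotProduct_mulVec]
  constructor
  · rw [IsHermitian, conjTranspose_eq_transpose_of_trivial]
    exact amF_symm x1 φ t
  · intro v hv
    have key : ∑ j, ∑ k, v j * v k * (∫ s in x1..t, φ j s * φ k s)
        = ∫ s in x1..t, (∑ j, v j * φ j s) ^ 2 := by
      have h1 : ∀ s : ℝ, (∑ j, v j * φ j s) ^ 2
          = ∑ j, ∑ k, v j * v k * (φ j s * φ k s) := by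
        intro s
        rw [sq, Finset.sum_mul_sum]
        exact Finset.sum_congr rfl fun j _ => Finset.sum_congr rfl fun k _ => by ring
      simp_rw [h1]
      rw [intervalIntegral.integral_finset_sum]
      · refine Finset.sum_congr rfl fun j _ => ?_
        rw [intervalIntegral.integral_finset_sum]
        · exact Finset.sum_congr rfl fun k _ => by
            rw [intervalIntegral.integral_const_mul]
        · exact fun k _ => (hint j k).const_mul _
      · intro j _
        have h := IntervalIntegrable.sum (μ := volume) (a := x1) (b := t) Finset.univ
          (f := fun k s => v j * v k * (φ j s * φ k s)) (fun k _ => (hint j k).const_mul _)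
        simpa [Finset.sum_fn] using h
    have hpos2 : (0:ℝ) ≤ ∑ j, ∑ k, v j * v k * (∫ s in x1..t, φ j s * φ k s) := by
      rw [key]
      exact intervalIntegral.integral_nonneg ht1 fun s _ => sq_nonneg _
    have hexp : star v ⬝ᵥ (amF x1 φ t) *ᵥ v
        = (∑ j, v j * v j) + ∑ j, ∑ k, v j * v k * (∫ s in x1..t, φ j s * φ k s) := by
      simp only [dotProduct, mulVec, amF, of_apply, star_trivial, Pi.star_apply]
      rw [← Finset.sum_add_distrib]
      refine Finset.sum_congr rfl fun j _ => ?_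
      simp only [dotProduct, add_mul, Finset.mul_sum, Finset.sum_add_distrib]
      rw [mul_add, Finset.mul_sum]
      congr 1
      · rw [Finset.sum_eq_single j] <;> simp +contextual [eq_comm]
      · rw [Finset.mul_sum]
        exact Finset.sum_congr rfl fun k _ => by ring
    rw [hexp]
    have hps : 0 < ∑ j, v j * v j := by
      obtain ⟨i, hi⟩ := Function.ne_iff.1 hv
      exact Finset.sum_pos' (fun j _ => mul_self_nonneg _)
        ⟨i, Finset.mem_univ i, mul_self_pos.2 hi⟩
    linarith

theorem am_multi_integrated_identity (x1 x2 : ℝ) (M : ℕ) (φ : Fin M → ℝ → ℝ)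
    (f g : ℝ → ℝ)
    (hφc : ∀ j, ContinuousOn (φ j) (Ioo x1 x2))
    (hf : ContinuousOn f (Ioo x1 x2))
    (hg : ContinuousOn g (Ioo x1 x2))
    (hintφ : ∀ j k, ∀ x ∈ Ioo x1 x2,
      IntegrableOn (fun y => φ j y * φ k y) (Ioo x1 x))
    (hintf : ∀ j, ∀ x ∈ Ioo x1 x2,
      IntegrableOn (fun y => φ j y * f y) (Ioo x1 x))
    (hintg : ∀ j, ∀ x ∈ Ioo x1 x2,
      IntegrableOn (fun y => φ j y * g y) (Ioo x1 x))
    (hintfg : ∀ x ∈ Ioo x1 x2, IntegrableOn (fun y => f y * g y) (Ioo x1 x)) :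
    ∀ x ∈ Ioo x1 x2,
      (∫ t in x1..x, amTransform x1 φ f t * amTransform x1 φ g t) =
        (∫ t in x1..x, f t * g t) -
          ∑ j : Fin M, ∑ k : Fin M,
            (∫ t in x1..x, φ j t * f t) * (amF x1 φ x)⁻¹ j k *
              ∫ t in x1..x, φ k t * g t := by
  intro x hx
  obtain ⟨hx1, hx2⟩ := hx
  have hx1x : x1 ≤ x := hx1.le
  have hmem : ∀ t ∈ Ioo x1 x, t ∈ Ioo x1 x2 := fun t ht => ⟨ht.1, ht.2.trans hx2⟩
  have hmemIcc : ∀ t ∈ Ioo x1 x, t ∈ Icc x1 x := fun t ht => ⟨ht.1.le, ht.2.le⟩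
  -- interval integrability
  have hII : ∀ (h : ℝ → ℝ), IntegrableOn h (Ioo x1 x) → ∀ t ∈ Icc x1 x,
      IntervalIntegrable h volume x1 t := by
    intro h hh t ht
    rw [intervalIntegrable_iff_integrableOn_Ioo_of_le ht.1]
    exact hh.mono_set (Ioo_subset_Ioo_right ht.2)
  -- abbreviations
  set A : Fin M → ℝ → ℝ := fun j t => ∫ s in x1..t, φ j s * f s with hAdef
  set B : Fin M → ℝ → ℝ := fun k t => ∫ s in x1..t, φ k s * g s with hBdef
  set N : ℝ → Matrix (Fin M) (Fin M) ℝ := fun t => (amF x1 φ t)⁻¹ with hNdef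
  -- continuity of primitives on Icc
  have hprim : ∀ (h : ℝ → ℝ), IntegrableOn h (Ioo x1 x) →
      ContinuousOn (fun t => ∫ s in x1..t, h s) (Icc x1 x) := by
    intro h hh
    have := intervalIntegral.continuousOn_primitive_interval (a := x1) (b := x) (μ := volume)
      (f := h) ?_
    · rwa [uIcc_of_le hx1x] at this
    · rw [uIcc_of_le hx1x, integrableOn_Icc_iff_integrableOn_Ioo]
      exact hh
  have hAcont : ∀ j, ContinuousOn (A j) (Icc x1 x) := fun j =>
    hprim _ (hintf j x ⟨hx1, hx2⟩)
  have hBcont : ∀ k, ContinuousOn (B k) (Icc x1 x) := fun k =>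
    hprim _ (hintg k x ⟨hx1, hx2⟩)
  have hFecont : ∀ j k, ContinuousOn (fun t => amF x1 φ t j k) (Icc x1 x) := fun j k =>
    continuousOn_const.add (hprim _ (hintφ j k x ⟨hx1, hx2⟩))
  -- invertibility
  have hPD : ∀ t ∈ Icc x1 x, (amF x1 φ t).PosDef := fun t ht =>
    amF_posDef x1 φ t ht.1 fun j k => hII _ (hintφ j k x ⟨hx1, hx2⟩) t ht
  have hdet : ∀ t ∈ Icc x1 x, (amF x1 φ t).det ≠ 0 := fun t ht => (hPD t ht).det_pos.ne'
  -- N continuity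
  have hNcont : ∀ j k, ContinuousOn (fun t => N t j k) (Icc x1 x) :=
    continuousOn_matrix_inv hFecont hdet
  -- symmetry of N
  have hNsymm : ∀ t ∈ Icc x1 x, ∀ j k, N t j k = N t k j := by
    intro t ht j k
    have h1 : (amF x1 φ t)⁻¹ᵀ = (amF x1 φ t)⁻¹ := by
      rw [Matrix.transpose_nonsing_inv, amF_symm]
    calc N t j k = (amF x1 φ t)⁻¹ᵀ k j := rfl
      _ = N t k j := by rw [h1]
  -- derivatives of primitives
  have hderivPrim : ∀ (h : ℝ → ℝ), IntegrableOn h (Ioo x1 x) → ContinuousOn h (Ioo x1 x2) →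
      ∀ t ∈ Ioo x1 x, HasDerivAt (fun u => ∫ s in x1..u, h s) (h t) t := by
    intro h hInt hCont t ht
    exact intervalIntegral.integral_hasDerivAt_right (hII h hInt t (hmemIcc t ht))
      (hCont.stronglyMeasurableAtFilter isOpen_Ioo t (hmem t ht))
      (hCont.continuousAt (isOpen_Ioo.mem_nhds (hmem t ht)))
  have hA' : ∀ j, ∀ t ∈ Ioo x1 x, HasDerivAt (A j) (φ j t * f t) t := fun j t ht =>
    hderivPrim _ (hintf j x ⟨hx1, hx2⟩) ((hφc j).mul hf) t ht
  have hB' : ∀ k, ∀ t ∈ Ioo x1 x, HasDerivAt (B k) (φ k t * g t) t := fun k t ht =>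
    hderivPrim _ (hintg k x ⟨hx1, hx2⟩) ((hφc k).mul hg) t ht
  have hF' : ∀ t ∈ Ioo x1 x, ∀ j k,
      HasDerivAt (fun s => amF x1 φ s j k) (φ j t * φ k t) t := fun t ht j k =>
    (hderivPrim _ (hintφ j k x ⟨hx1, hx2⟩) ((hφc j).mul (hφc k)) t ht).const_add _
  -- derivative of N
  have hN' : ∀ t ∈ Ioo x1 x, ∀ j k,
      HasDerivAt (fun s => N s j k)
        ((-(N t * (Matrix.of fun l m => φ l t * φ m t) * N t)) j k) t := by
    intro t ht j k
    exact hasDerivAt_matrix_inv (hF' t ht)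
      (Filter.eventually_of_mem (isOpen_Ioo.mem_nhds ht)
        fun s hs => isUnit_iff_ne_zero.2 (hdet s (hmemIcc s hs))) j k
  -- derivative of H
  have hH' : ∀ t ∈ Ioo x1 x,
      HasDerivAt (fun u => ∑ j, ∑ k, A j u * N u j k * B k u)
        (f t * g t - amTransform x1 φ f t * amTransform x1 φ g t) t := by
    intro t ht
    have hsum : HasDerivAt (fun u => ∑ j, ∑ k, A j u * N u j k * B k u)
        (∑ j, ∑ k, ((φ j t * f t * N t j k
            + A j t * (-(N t * (Matrix.of fun l m => φ l t * φ m t) * N t)) j k) * B k t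
          + A j t * N t j k * (φ k t * g t))) t :=
      HasDerivAt.fun_sum fun j _ => HasDerivAt.fun_sum fun k _ =>
        (((hA' j t ht).mul (hN' t ht j k)).mul (hB' k t ht))
    have halg := am_algebra (fun j => A j t) (fun k => B k t) (fun j => φ j t)
      (N t) (hNsymm t (hmemIcc t ht)) (f t) (g t)
    rw [halg] at hsum
    have hfM : amTransform x1 φ f t = f t - ∑ j, ∑ k, φ j t * N t j k * A k t := rfl
    have hgM : amTransform x1 φ g t = g t - ∑ j, ∑ k, φ j t * N t j k * B k t := rfl
    rw [hfM, hgM]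
    exact hsum
  -- integrability of the transformed product
  have hfgMint : IntervalIntegrable
      (fun t => amTransform x1 φ f t * amTransform x1 φ g t) volume x1 x := by
    have hxmem : x ∈ Icc x1 x := ⟨hx1x, le_rfl⟩
    have hsumII : ∀ (F : Fin M → Fin M → ℝ → ℝ),
        (∀ j k, IntervalIntegrable (F j k) volume x1 x) →
        IntervalIntegrable (fun t => ∑ j, ∑ k, F j k t) volume x1 x := by
      intro F hF
      have h1 : ∀ j, IntervalIntegrable (fun t => ∑ k, F j k t) volume x1 x := by
        intro j
        have := IntervalIntegrable.sum (μ := volume) (a := x1) (b := x) Finset.univ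
          (f := F j) (fun k _ => hF j k)
        simpa [Finset.sum_fn] using this
      have := IntervalIntegrable.sum (μ := volume) (a := x1) (b := x) Finset.univ
        (f := fun j t => ∑ k, F j k t) (fun j _ => h1 j)
      simpa [Finset.sum_fn] using this
    have hptwise : (fun t => amTransform x1 φ f t * amTransform x1 φ g t)
        = fun t => f t * g t
          - (∑ j, ∑ k, (φ j t * f t) * (N t j k * B k t))
          - (∑ j, ∑ k, (φ j t * g t) * (N t j k * A k t))
          + ∑ j, ∑ l, (φ j t * φ l t)
              * ((∑ k, N t j k * A k t) * (∑ m, N t l m * B m t)) := by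
      funext t
      have hfM : amTransform x1 φ f t = f t - ∑ j, ∑ k, φ j t * N t j k * A k t := rfl
      have hgM : amTransform x1 φ g t = g t - ∑ j, ∑ k, φ j t * N t j k * B k t := rfl
      rw [hfM, hgM, am_algebra2 (fun k => A k t) (fun k => B k t) (fun j => φ j t)
        (N t) (f t) (g t)]
    rw [hptwise]
    have hint1 : IntervalIntegrable (fun t => f t * g t) volume x1 x :=
      hII _ (hintfg x ⟨hx1, hx2⟩) x hxmem
    have hint2 : IntervalIntegrable
        (fun t => ∑ j, ∑ k, (φ j t * f t) * (N t j k * B k t)) volume x1 x :=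
      hsumII _ fun j k => (hII _ (hintf j x ⟨hx1, hx2⟩) x hxmem).mul_continuousOn
        (by rw [uIcc_of_le hx1x]; exact (hNcont j k).mul (hBcont k))
    have hint3 : IntervalIntegrable
        (fun t => ∑ j, ∑ k, (φ j t * g t) * (N t j k * A k t)) volume x1 x :=
      hsumII _ fun j k => (hII _ (hintg j x ⟨hx1, hx2⟩) x hxmem).mul_continuousOn
        (by rw [uIcc_of_le hx1x]; exact (hNcont j k).mul (hAcont k))
    have hint4 : IntervalIntegrable
        (fun t => ∑ j, ∑ l, (φ j t * φ l t)
          * ((∑ k, N t j k * A k t) * (∑ m, N t l m * B m t))) volume x1 x := by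
      refine hsumII _ fun j l => (hII _ (hintφ j l x ⟨hx1, hx2⟩) x hxmem).mul_continuousOn ?_
      rw [uIcc_of_le hx1x]
      exact (continuousOn_finset_sum _ fun k _ => (hNcont j k).mul (hAcont k)).mul
        (continuousOn_finset_sum _ fun m _ => (hNcont l m).mul (hBcont m))
    exact ((hint1.sub hint2).sub hint3).add hint4
  -- FTC
  have hKcont : ContinuousOn
      (fun t => (∫ s in x1..t, f s * g s) - ∑ j, ∑ k, A j t * N t j k * B k t)
      (Icc x1 x) := by
    refine (hprim _ (hintfg x ⟨hx1, hx2⟩)).sub ?_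
    exact continuousOn_finset_sum _ fun j _ => continuousOn_finset_sum _ fun k _ =>
      ((hAcont j).mul (hNcont j k)).mul (hBcont k)
  have hKderiv : ∀ t ∈ Ioo x1 x, HasDerivWithinAt
      (fun t => (∫ s in x1..t, f s * g s) - ∑ j, ∑ k, A j t * N t j k * B k t)
      (amTransform x1 φ f t * amTransform x1 φ g t) (Ioi t) t := by
    intro t ht
    have h1 := (hderivPrim _ (hintfg x ⟨hx1, hx2⟩) (hf.mul hg) t ht).sub (hH' t ht)
    have h2 : f t * g t - (f t * g t - amTransform x1 φ f t * amTransform x1 φ g t)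
        = amTransform x1 φ f t * amTransform x1 φ g t := by ring
    rw [h2] at h1
    exact h1.hasDerivWithinAt
  have hFTC := intervalIntegral.integral_eq_sub_of_hasDeriv_right_of_le hx1x
    hKcont hKderiv hfgMint
  rw [hFTC]
  have hA0 : ∀ j, A j x1 = 0 := fun j => intervalIntegral.integral_same
  have hB0 : ∀ k, B k x1 = 0 := fun k => intervalIntegral.integral_same
  simp only [intervalIntegral.integral_same]
  rw [show (∑ j, ∑ k, A j x1 * N x1 j k * B k x1) = 0 from by simp [hA0]]
  ring
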